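/- For all real a ≠ 0 and b, the function F(r) = (√π/(2|a|))·[exp(2|a||b|)·Φ(√(2a²)·r + √(2b²)/r) + exp(−2|a||b|)·Φ(√(2a²)·r − √(2b²)/r)] is an antiderivative on (0,∞) of r ↦ exp(−a²r² − b²/r²), where Φ is the standard normal CDF. -/

import Mathlib

open MeasureTheory Real

noncomputable def Phi (x : ℝ) : ℝ :=
  ∫ u in Set.Iic x, Real.exp (-u ^ 2 / 2) / Real.sqrt (2 * Real.pi)

lemma integrable_f : Integrable (fun u : ℝ => Real.exp (-u ^ 2 / 2) / Real.sqrt (2 * Real.pi)) := by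
  have h := (integrable_exp_neg_mul_sq (by norm_num : (0:ℝ) < 1/2)).div_const (Real.sqrt (2 * Real.pi))
  convert h using 2 with u
  ring_nf

lemma hasDerivAt_Phi (x : ℝ) :
    HasDerivAt Phi (Real.exp (-x ^ 2 / 2) / Real.sqrt (2 * Real.pi)) x := by
  have hf := integrable_f
  have key : ∀ y : ℝ, Phi y = Phi 0 + ∫ u in (0:ℝ)..y,
      Real.exp (-u ^ 2 / 2) / Real.sqrt (2 * Real.pi) := by
    intro y
    rw [← intervalIntegral.integral_Iic_sub_Iic hf.integrableOn hf.integrableOn]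
    simp [Phi]
  have hd : HasDerivAt (fun y : ℝ => Phi 0 + ∫ u in (0:ℝ)..y,
      Real.exp (-u ^ 2 / 2) / Real.sqrt (2 * Real.pi))
      (Real.exp (-x ^ 2 / 2) / Real.sqrt (2 * Real.pi)) x := by
    refine HasDerivAt.const_add _ ?_
    exact intervalIntegral.integral_hasDerivAt_right hf.intervalIntegrable
      hf.1.stronglyMeasurableAtFilter ((Continuous.div_const (by continuity) _).continuousAt)
  exact hd.congr_of_eventuallyEq (Filter.Eventually.of_forall key)

theorem stmt_1 (a b : ℝ) (ha : a ≠ 0) (r : ℝ) (hr : 0 < r) :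
    HasDerivAt (fun r : ℝ =>
        Real.sqrt Real.pi / (2 * |a|) *
          (Real.exp (2 * |a| * |b|) * Phi (Real.sqrt (2 * a ^ 2) * r + Real.sqrt (2 * b ^ 2) / r)
            + Real.exp (-(2 * |a| * |b|)) *
              Phi (Real.sqrt (2 * a ^ 2) * r - Real.sqrt (2 * b ^ 2) / r)))
      (Real.exp (-(a ^ 2) * r ^ 2 - b ^ 2 / r ^ 2)) r := by
  have hr0 : r ≠ 0 := hr.ne'
  have hca : Real.sqrt (2 * a ^ 2) = Real.sqrt 2 * |a| := by
    rw [Real.sqrt_mul (by norm_num), Real.sqrt_sq_eq_abs]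
  have hcb : Real.sqrt (2 * b ^ 2) = Real.sqrt 2 * |b| := by
    rw [Real.sqrt_mul (by norm_num), Real.sqrt_sq_eq_abs]
  have hpi : Real.sqrt (2 * Real.pi) = Real.sqrt 2 * Real.sqrt Real.pi :=
    Real.sqrt_mul (by norm_num) _
  have h1 : HasDerivAt (fun x : ℝ => Real.sqrt (2 * a ^ 2) * x + Real.sqrt (2 * b ^ 2) / x)
      (Real.sqrt (2 * a ^ 2) + Real.sqrt (2 * b ^ 2) * (-(r ^ 2)⁻¹)) r := by
    have := ((hasDerivAt_id r).const_mul (Real.sqrt (2 * a ^ 2))).add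
      ((hasDerivAt_inv hr0).const_mul (Real.sqrt (2 * b ^ 2)))
    simp only [div_eq_mul_inv]
    exact this.congr_deriv (by ring)
  have h2 : HasDerivAt (fun x : ℝ => Real.sqrt (2 * a ^ 2) * x - Real.sqrt (2 * b ^ 2) / x)
      (Real.sqrt (2 * a ^ 2) - Real.sqrt (2 * b ^ 2) * (-(r ^ 2)⁻¹)) r := by
    have := ((hasDerivAt_id r).const_mul (Real.sqrt (2 * a ^ 2))).sub
      ((hasDerivAt_inv hr0).const_mul (Real.sqrt (2 * b ^ 2)))
    simp only [div_eq_mul_inv]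
    exact this.congr_deriv (by ring)
  have H1 := (hasDerivAt_Phi (Real.sqrt (2 * a ^ 2) * r + Real.sqrt (2 * b ^ 2) / r)).comp r h1
  have H2 := (hasDerivAt_Phi (Real.sqrt (2 * a ^ 2) * r - Real.sqrt (2 * b ^ 2) / r)).comp r h2
  have H := ((H1.const_mul (Real.exp (2 * |a| * |b|))).add
    (H2.const_mul (Real.exp (-(2 * |a| * |b|))))).const_mul (Real.sqrt Real.pi / (2 * |a|))
  refine H.congr_deriv ?_
  have hs : Real.sqrt 2 ^ 2 = 2 := Real.sq_sqrt (by norm_num)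
  have hane : |a| ≠ 0 := abs_ne_zero.mpr ha
  have hsp : Real.sqrt Real.pi ≠ 0 := by positivity
  have hs2 : Real.sqrt 2 ≠ 0 := by positivity
  have e1 : Real.exp (2 * |a| * |b|) *
      Real.exp (-(Real.sqrt (2 * a ^ 2) * r + Real.sqrt (2 * b ^ 2) / r) ^ 2 / 2) =
      Real.exp (-(a ^ 2) * r ^ 2 - b ^ 2 / r ^ 2) := by
    rw [← Real.exp_add]
    congr 1
    rw [hca, hcb]
    field_simp
    ring_nf
    simp only [hs, sq_abs]
    ring_nf
  have e2 : Real.exp (-(2 * |a| * |b|)) *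
      Real.exp (-(Real.sqrt (2 * a ^ 2) * r - Real.sqrt (2 * b ^ 2) / r) ^ 2 / 2) =
      Real.exp (-(a ^ 2) * r ^ 2 - b ^ 2 / r ^ 2) := by
    rw [← Real.exp_add]
    congr 1
    rw [hca, hcb]
    field_simp
    ring_nf
    simp only [hs, sq_abs]
    ring_nf
  set E := Real.exp (-(a ^ 2) * r ^ 2 - b ^ 2 / r ^ 2) with hE
  set X1 := Real.exp (-(Real.sqrt (2 * a ^ 2) * r + Real.sqrt (2 * b ^ 2) / r) ^ 2 / 2) with hX1
  set X2 := Real.exp (-(Real.sqrt (2 * a ^ 2) * r - Real.sqrt (2 * b ^ 2) / r) ^ 2 / 2) with hX2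
  set D1 := Real.sqrt (2 * a ^ 2) + Real.sqrt (2 * b ^ 2) * (-(r ^ 2)⁻¹) with hD1
  set D2 := Real.sqrt (2 * a ^ 2) - Real.sqrt (2 * b ^ 2) * (-(r ^ 2)⁻¹) with hD2
  have : Real.sqrt Real.pi / (2 * |a|) *
      (Real.exp (2 * |a| * |b|) * (X1 / Real.sqrt (2 * Real.pi) * D1) +
        Real.exp (-(2 * |a| * |b|)) * (X2 / Real.sqrt (2 * Real.pi) * D2)) =
      Real.sqrt Real.pi / (2 * |a|) / Real.sqrt (2 * Real.pi) *
        ((Real.exp (2 * |a| * |b|) * X1) * D1 + (Real.exp (-(2 * |a| * |b|)) * X2) * D2) := by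
    ring
  rw [this, e1, e2, hpi, hD1, hD2, hca, hcb]
  field_simp
  ring
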